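/- arXiv:1606.08596 — 2 statements merged into one kernel-verified Lean document; each statement's English description precedes it below -/
import Mathlib

section
/- Let e⁻¹ ≤ q1 < q2 < 1. Define for q ∈ (0,1) the function H_q(z) = -q(ln z - ln q) for z ∈ (q,1] and H_q(z) = 0 for z ∈ [0,q]. Then H_{q1}(z) ≤ H_{q2}(z) for all z ∈ [0,1], with strict inequality for some z (e.g., z = 1). -/
private lemma aux_deriv (z q : ℝ) (hq : 0 < q) :
    HasDerivAt (fun q => q * (Real.log q - Real.log z))
      (Real.log q + 1 - Real.log z) q := by
  have h1 : HasDerivAt (fun q : ℝ => q * Real.log q) (Real.log q + 1) q :=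
    Real.hasDerivAt_mul_log (ne_of_gt hq)
  have h2 : HasDerivAt (fun q : ℝ => q * Real.log z) (Real.log z) q := by
    simpa using (hasDerivAt_id q).mul_const (Real.log z)
  have := h1.sub h2
  have e : (fun q => q * (Real.log q - Real.log z)) =
      ((fun q : ℝ => q * Real.log q) - fun q => q * Real.log z) := by
    funext x
    simp only [Pi.sub_apply]
    ring
  rw [e]
  exact this

private lemma aux_mono (z : ℝ) (hz0 : 0 < z) (hz1 : z ≤ 1) (a b : ℝ)
    (ha : Real.exp (-1) ≤ a) (hab : a ≤ b) :
    a * (Real.log a - Real.log z) ≤ b * (Real.log b - Real.log z) := by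
  have hepos : (0:ℝ) < Real.exp (-1) := Real.exp_pos _
  have ha0 : 0 < a := lt_of_lt_of_le hepos ha
  have hmono : MonotoneOn (fun q => q * (Real.log q - Real.log z)) (Set.Icc a b) := by
    apply monotoneOn_of_deriv_nonneg (convex_Icc a b)
    · apply ContinuousOn.mul continuousOn_id
      apply ContinuousOn.sub _ continuousOn_const
      exact Real.continuousOn_log.mono (fun x hx => ne_of_gt (lt_of_lt_of_le ha0 hx.1))
    · intro x hx
      rw [interior_Icc] at hx
      exact (aux_deriv z x (lt_trans ha0 hx.1)).differentiableAt.differentiableWithinAt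
    · intro x hx
      rw [interior_Icc] at hx
      have hx0 : 0 < x := lt_trans ha0 hx.1
      rw [(aux_deriv z x hx0).deriv]
      have h1 : Real.log a ≤ Real.log x := Real.log_le_log ha0 (le_of_lt hx.1)
      have h2 : (-1 : ℝ) ≤ Real.log a := by
        calc (-1:ℝ) = Real.log (Real.exp (-1)) := (Real.log_exp _).symm
        _ ≤ Real.log a := Real.log_le_log hepos ha
      have h3 : Real.log z ≤ 0 := Real.log_nonpos (le_of_lt hz0) hz1
      linarith
  exact hmono (Set.left_mem_Icc.2 hab) (Set.right_mem_Icc.2 hab) hab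

private lemma aux_strict (a b : ℝ) (ha : Real.exp (-1) ≤ a) (hab : a < b) :
    a * Real.log a < b * Real.log b := by
  have hepos : (0:ℝ) < Real.exp (-1) := Real.exp_pos _
  have ha0 : 0 < a := lt_of_lt_of_le hepos ha
  have hmono : StrictMonoOn (fun q : ℝ => q * Real.log q) (Set.Icc a b) := by
    apply strictMonoOn_of_deriv_pos (convex_Icc a b)
    · apply ContinuousOn.mul continuousOn_id
      exact Real.continuousOn_log.mono (fun x hx => ne_of_gt (lt_of_lt_of_le ha0 hx.1))
    · intro x hx
      rw [interior_Icc] at hx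
      have hx0 : 0 < x := lt_trans ha0 hx.1
      rw [(Real.hasDerivAt_mul_log (ne_of_gt hx0)).deriv]
      have h1 : Real.log a < Real.log x := Real.log_lt_log ha0 hx.1
      have h2 : (-1 : ℝ) ≤ Real.log a := by
        calc (-1:ℝ) = Real.log (Real.exp (-1)) := (Real.log_exp _).symm
        _ ≤ Real.log a := Real.log_le_log hepos ha
      linarith
  exact hmono (Set.left_mem_Icc.2 (le_of_lt hab)) (Set.right_mem_Icc.2 (le_of_lt hab)) hab

theorem stmt_4 (q1 q2 : ℝ) (h1 : Real.exp (-1) ≤ q1) (h12 : q1 < q2) (h2 : q2 < 1)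
    (H : ℝ → ℝ → ℝ)
    (hH : ∀ q ∈ Set.Ioo (0:ℝ) 1, ∀ z,
      H q z = if q < z then -q * (Real.log z - Real.log q) else 0) :
    (∀ z ∈ Set.Icc (0:ℝ) 1, H q1 z ≤ H q2 z) ∧ H q1 1 < H q2 1 := by
  have hepos : (0:ℝ) < Real.exp (-1) := Real.exp_pos _
  have hq10 : 0 < q1 := lt_of_lt_of_le hepos h1
  have hq20 : 0 < q2 := lt_trans hq10 h12
  have hq11 : q1 < 1 := lt_trans h12 h2
  have hm1 : q1 ∈ Set.Ioo (0:ℝ) 1 := ⟨hq10, hq11⟩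
  have hm2 : q2 ∈ Set.Ioo (0:ℝ) 1 := ⟨hq20, h2⟩
  constructor
  · intro z hz
    rw [hH q1 hm1 z, hH q2 hm2 z]
    by_cases hc2 : q2 < z
    · have hc1 : q1 < z := lt_trans h12 hc2
      rw [if_pos hc1, if_pos hc2]
      have := aux_mono z (lt_trans hq20 hc2) hz.2 q1 q2 h1 (le_of_lt h12)
      nlinarith
    · rw [if_neg hc2]
      by_cases hc1 : q1 < z
      · rw [if_pos hc1]
        have hz0 : 0 < z := lt_trans hq10 hc1
        have : Real.log q1 ≤ Real.log z := Real.log_le_log hq10 (le_of_lt hc1)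
        nlinarith
      · rw [if_neg hc1]
  · rw [hH q1 hm1 1, hH q2 hm2 1, if_pos hq11, if_pos h2]
    have := aux_strict q1 q2 h1 h12
    simp only [Real.log_one]
    nlinarith
end

section
/- For the ramp alternative g(t) = c0 for t ∈ [0,t0] and g(t) = c0 + c1 t0 − c1 t for t ∈ (t0,1], with c1 > 0 and t0 ∈ [0,1), the drift h(z) = ∫_0^z g(t) dt − ∫_0^z (1/s) ∫_0^s g(t) dt ds satisfies h(z) ≤ 0 for all z ∈ [0,1] and h(z) < 0 for z ∈ (t0,1]. -/
theorem stmt_9 (t0 c0 c1 : ℝ) (ht0 : t0 ∈ Set.Ico (0:ℝ) 1) (hc1 : 0 < c1)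
    (g : ℝ → ℝ) (hg : ∀ t, g t = if t ≤ t0 then c0 else c0 + c1 * t0 - c1 * t)
    (A : ℝ → ℝ) (hA0 : A 0 = c0)
    (hA : ∀ s ∈ Set.Ioc (0:ℝ) 1, A s = (1 / s) * ∫ t in (0:ℝ)..s, g t)
    (h : ℝ → ℝ)
    (hh : ∀ z, h z = (∫ t in (0:ℝ)..z, g t) - ∫ s in (0:ℝ)..z, A s) :
    (∀ z ∈ Set.Icc (0:ℝ) 1, h z ≤ 0) ∧ (∀ z ∈ Set.Ioc t0 1, h z < 0) := by
  obtain ⟨ht00, ht01⟩ := ht0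
  -- g is continuous
  have hgmin : g = fun t => min c0 (c0 + c1 * t0 - c1 * t) := by
    funext t
    rw [hg]
    rcases le_or_gt t t0 with ht | ht
    · rw [if_pos ht, eq_comm, min_eq_left_iff]
      nlinarith
    · rw [if_neg (not_le.mpr ht), eq_comm, min_eq_right_iff]
      nlinarith
  have hgc : Continuous g := by
    rw [hgmin]
    exact continuous_const.min (by continuity)
  have hIg : ∀ a b : ℝ, IntervalIntegrable g MeasureTheory.volume a b :=
    fun a b => hgc.intervalIntegrable a b
  -- integral of g on [0, z] for z ≤ t0
  have hG1 : ∀ z, 0 ≤ z → z ≤ t0 → (∫ t in (0:ℝ)..z, g t) = c0 * z := by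
    intro z hz0 hz
    rw [intervalIntegral.integral_congr (g := fun _ => c0)
      (by
        intro t ht
        rw [Set.uIcc_of_le hz0] at ht
        rw [hg, if_pos (le_trans ht.2 hz)]),
      intervalIntegral.integral_const]
    simp [mul_comm]
  -- integral of g on [t0, z] for z ≥ t0
  have hG2 : ∀ z, t0 ≤ z →
      (∫ t in t0..z, g t) = (c0 + c1 * t0) * (z - t0) - c1 * (z ^ 2 - t0 ^ 2) / 2 := by
    intro z hz
    have heq : Set.EqOn g (fun t => (c0 + c1 * t0) - c1 * t) (Set.uIcc t0 z) := by
      intro t ht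
      rw [Set.uIcc_of_le hz] at ht
      rw [hg]
      rcases le_or_gt t t0 with h1 | h1
      · have : t = t0 := le_antisymm h1 ht.1
        rw [if_pos h1, this]; ring
      · rw [if_neg (not_le.mpr h1)]
    have hint2 : IntervalIntegrable (fun t : ℝ => c1 * t) MeasureTheory.volume t0 z :=
      (continuous_const.mul continuous_id').intervalIntegrable t0 z
    rw [intervalIntegral.integral_congr heq,
      intervalIntegral.integral_sub intervalIntegrable_const hint2,
      intervalIntegral.integral_const, intervalIntegral.integral_const_mul,
      integral_id]
    simp only [smul_eq_mul]
    ring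
  -- A = c0 on [0, t0]
  have hAc : ∀ s, 0 ≤ s → s ≤ t0 → A s = c0 := by
    intro s hs0 hs
    rcases hs0.eq_or_lt with heq | hs0'
    · rw [← heq, hA0]
    · rw [hA s ⟨hs0', le_of_lt (lt_of_le_of_lt hs ht01)⟩, hG1 s hs0 hs]
      field_simp
  -- integral of A on [0, z] for z ≤ t0
  have hIA1 : ∀ z, 0 ≤ z → z ≤ t0 → (∫ s in (0:ℝ)..z, A s) = c0 * z := by
    intro z hz0 hz
    rw [intervalIntegral.integral_congr (g := fun _ => c0)
      (by
        intro s hs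
        rw [Set.uIcc_of_le hz0] at hs
        exact hAc s hs.1 (hs.2.trans hz)),
      intervalIntegral.integral_const]
    simp [mul_comm]
  -- the explicit formula for A on [t0, 1]
  set φ : ℝ → ℝ := fun s => c0 - c1 / 2 * (s - 2 * t0 + t0 ^ 2 / s) with hφ
  have hAφ : ∀ s, t0 ≤ s → s ≤ 1 → A s = φ s := by
    intro s hs hs1
    rcases (ht00.trans hs).eq_or_lt with heq | hs0
    · have ht0z : t0 = 0 := le_antisymm (heq ▸ hs) ht00
      rw [← heq, hA0, hφ]
      simp [ht0z]
    · have hint : (∫ t in (0:ℝ)..s, g t)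
          = c0 * t0 + ((c0 + c1 * t0) * (s - t0) - c1 * (s ^ 2 - t0 ^ 2) / 2) := by
        rw [← intervalIntegral.integral_add_adjacent_intervals (hIg 0 t0) (hIg t0 s),
          hG1 t0 ht00 le_rfl, hG2 s hs]
      rw [hA s ⟨hs0, hs1⟩, hint, hφ]
      field_simp
      ring
  -- continuity of φ on [t0, z] when t0 ≤ z
  have hφc : ∀ z, t0 ≤ z → ContinuousOn φ (Set.uIcc t0 z) := by
    intro z hz
    rw [Set.uIcc_of_le hz]
    rcases ht00.eq_or_lt with heq | ht0pos
    · have : φ = fun s => c0 - c1 / 2 * s := by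
        funext s
        rw [hφ, ← heq]
        norm_num
      rw [this]
      exact (continuous_const.sub (continuous_const.mul continuous_id)).continuousOn
    · apply continuousOn_const.sub
      apply continuousOn_const.mul
      apply (continuousOn_id.sub continuousOn_const).add
      exact continuousOn_const.div continuousOn_id
        (fun x hx => ne_of_gt (lt_of_lt_of_le ht0pos hx.1))
  -- h z < 0 for z ∈ (t0, 1]
  have key : ∀ z, t0 < z → z ≤ 1 → h z < 0 := by
    intro z htz hz1
    have hz0 : (0:ℝ) ≤ z := le_of_lt (lt_of_le_of_lt ht00 htz)
    -- integrability of A on the pieces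
    have hA1int : IntervalIntegrable A MeasureTheory.volume 0 t0 := by
      apply (intervalIntegrable_const (c := c0)).congr
      intro s hs
      rw [Set.uIoc_of_le ht00] at hs
      exact (hAc s hs.1.le hs.2).symm
    have hφint : IntervalIntegrable φ MeasureTheory.volume t0 z :=
      (hφc z htz.le).intervalIntegrable
    have hA2int : IntervalIntegrable A MeasureTheory.volume t0 z := by
      apply hφint.congr
      intro s hs
      rw [Set.uIoc_of_le htz.le] at hs
      exact (hAφ s hs.1.le (hs.2.trans hz1)).symm
    have hsplitA : (∫ s in (0:ℝ)..z, A s) = c0 * t0 + ∫ s in t0..z, A s := by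
      rw [← intervalIntegral.integral_add_adjacent_intervals hA1int hA2int,
        hIA1 t0 ht00 le_rfl]
    have hAeqφ : (∫ s in t0..z, A s) = ∫ s in t0..z, φ s :=
      intervalIntegral.integral_congr (fun s hs => by
        rw [Set.uIcc_of_le htz.le] at hs
        exact hAφ s hs.1 (hs.2.trans hz1))
    have hsplitg : (∫ t in (0:ℝ)..z, g t) = c0 * t0 + ∫ t in t0..z, g t := by
      rw [← intervalIntegral.integral_add_adjacent_intervals (hIg 0 t0) (hIg t0 z),
        hG1 t0 ht00 le_rfl]
    -- pointwise bound : g s ≤ φ s - c1/2 * (s^2 - t0^2) on [t0, z]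
    have hpoint : ∀ s ∈ Set.Icc t0 z, g s ≤ φ s - c1 / 2 * (s ^ 2 - t0 ^ 2) := by
      intro s hs
      have hgs : g s = c0 + c1 * t0 - c1 * s := by
        rw [hg]
        rcases le_or_gt s t0 with h1 | h1
        · have : s = t0 := le_antisymm h1 hs.1
          rw [if_pos h1, this]; ring
        · rw [if_neg (not_le.mpr h1)]
      rcases (ht00.trans hs.1).eq_or_lt with heq | hs0
      · have ht0z : t0 = 0 := le_antisymm (heq ▸ hs.1) ht00
        rw [hgs, hφ, ← heq, ht0z]
        norm_num
      · have hu : t0 ^ 2 / s * s = t0 ^ 2 := div_mul_cancel₀ _ (ne_of_gt hs0)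
        have hu0 : 0 ≤ t0 ^ 2 / s := div_nonneg (sq_nonneg _) hs0.le
        have hs1' : s ≤ 1 := hs.2.trans hz1
        have hst : t0 ≤ s := hs.1
        rw [hgs, hφ]
        rw [← sub_nonneg]
        have hkey : (0:ℝ) ≤ (s ^ 2 - t0 ^ 2) * (1 - s) :=
          mul_nonneg (by nlinarith) (by linarith)
        nlinarith [mul_pos hs0 hc1]
      -- end pointwise
    have hmono : (∫ t in t0..z, g t)
        ≤ ∫ s in t0..z, (φ s - c1 / 2 * (s ^ 2 - t0 ^ 2)) := by
      apply intervalIntegral.integral_mono_on htz.le (hIg t0 z)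
        (hφint.sub ((continuous_const.mul ((continuous_pow 2).sub continuous_const)).intervalIntegrable t0 z)) hpoint
    have hpolyint : (∫ s in t0..z, c1 / 2 * (s ^ 2 - t0 ^ 2))
        = c1 / 2 * ((z ^ 3 - t0 ^ 3) / 3 - t0 ^ 2 * (z - t0)) := by
      rw [intervalIntegral.integral_const_mul,
        intervalIntegral.integral_sub ((continuous_pow 2).intervalIntegrable t0 z)
          intervalIntegrable_const,
        integral_pow, intervalIntegral.integral_const]
      simp only [smul_eq_mul]
      push_cast
      ring
    have hsubint : (∫ s in t0..z, (φ s - c1 / 2 * (s ^ 2 - t0 ^ 2)))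
        = (∫ s in t0..z, φ s) - c1 / 2 * ((z ^ 3 - t0 ^ 3) / 3 - t0 ^ 2 * (z - t0)) := by
      rw [intervalIntegral.integral_sub hφint
        (show IntervalIntegrable (fun s : ℝ => c1 / 2 * (s ^ 2 - t0 ^ 2)) MeasureTheory.volume t0 z from
          (continuous_const.mul ((continuous_pow 2).sub continuous_const)).intervalIntegrable t0 z), hpolyint]
    have hpos : 0 < c1 / 2 * ((z ^ 3 - t0 ^ 3) / 3 - t0 ^ 2 * (z - t0)) := by
      have h1 : (z ^ 3 - t0 ^ 3) / 3 - t0 ^ 2 * (z - t0) = (z - t0) ^ 2 * (z + 2 * t0) / 3 := by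
        ring
      rw [h1]
      have hzpos : 0 < z := lt_of_le_of_lt ht00 htz
      exact mul_pos (by positivity)
        (div_pos (mul_pos (pow_pos (sub_pos.mpr htz) 2) (by linarith)) (by norm_num))
    rw [hh z, hsplitA, hsplitg, hAeqφ]
    have := hmono.trans_eq hsubint
    linarith
  -- assemble
  constructor
  · intro z hz
    rcases le_or_gt z t0 with hzt | hzt
    · rw [hh z, hG1 z hz.1 hzt, hIA1 z hz.1 hzt]
      simp
    · exact (key z hzt hz.2).le
  · intro z hz
    exact key z hz.1 hz.2
end
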